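/- Let G be a cactus graph with basic 5-cycle on y1,y4,y2,y3,y5 (cyclic order, y3,y4,y5 of degree 2), with T, T_1, T_2 as above. Suppose S1 = {y3,y4,y5} ∪ U1 ∪ U2 and S2 = {y1,y2,y5} ∪ V1 ∪ V2 are vertex covers of G with U_a, V_a ⊆ T_a for a = 1,2. Then W1 = {y2,y4,y5} ∪ U1 ∪ V2 and W2 = {y1,y3,y4} ∪ V1 ∪ U2 are also vertex covers of G. -/

import Mathlib

/-- `C` is a vertex cover of `G`: every edge has at least one endpoint in `C`. -/
def IsVC {V : Type*} (G : SimpleGraph V) (C : Set V) : Prop :=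
  ∀ ⦃u v : V⦄, G.Adj u v → u ∈ C ∨ v ∈ C

/-- The graph obtained from `G` by deleting the vertices in `s` (keeping the ambient
vertex type): the induced subgraph of `G` on `V(G) \ s`. -/
def delGraph {V : Type*} (G : SimpleGraph V) (s : Set V) : SimpleGraph V where
  Adj u v := G.Adj u v ∧ u ∉ s ∧ v ∉ s
  symm := ⟨fun u v ⟨h, hu, hv⟩ => ⟨h.symm, hv, hu⟩⟩
  loopless := ⟨fun u ⟨h, _, _⟩ => G.loopless.irrefl u h⟩

/-- `G` is a cactus graph: it is connected and each edge belongs to at most one cycle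
(cycles being identified with their edge sets). -/
def IsCactus {V : Type*} (G : SimpleGraph V) : Prop :=
  G.Connected ∧
    ∀ (u v : V) (c : G.Walk u u) (c' : G.Walk v v), c.IsCycle → c'.IsCycle →
      ∀ e, e ∈ c.edges → e ∈ c'.edges → {e' | e' ∈ c.edges} = {e' | e' ∈ c'.edges}

/-- With `T` the induced subgraph of `G` on `V(G) \ {y3,y4,y5}`, the set `T_a` of
vertices of `T` other than `y1, y2` joined to `ya` by a path in `T`. -/
def sideSet {V : Type*} (G : SimpleGraph V) (y1 y2 y3 y4 y5 ya : V) : Set V :=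
  {z | z ∉ ({y1, y2, y3, y4, y5} : Set V) ∧
    (delGraph G {y3, y4, y5}).Reachable z ya}

lemma delGraph_le {V : Type*} (G : SimpleGraph V) (s : Set V) : delGraph G s ≤ G :=
  fun _ _ h => h.1

lemma delGraph_support_not_mem {V : Type*} {G : SimpleGraph V} {s : Set V} {a b : V}
    (w : (delGraph G s).Walk a b) (ha : a ∉ s) : ∀ x ∈ w.support, x ∉ s := by
  induction w with
  | nil => intro x hx; simp at hx; subst hx; exact ha
  | cons h p ih =>
    intro x hx
    rw [SimpleGraph.Walk.support_cons] at hx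
    rcases List.mem_cons.1 hx with rfl | hx
    · exact ha
    · exact ih h.2.2 x hx

/-- Key lemma: in a cactus with the given 5-cycle configuration, `y1` and `y2` are not
reachable after deleting `y3, y4, y5`. -/
lemma key_no_reach {V : Type*} {G : SimpleGraph V} {y1 y2 y3 y4 y5 : V}
    (hcactus : IsCactus G)
    (n12 : y1 ≠ y2) (n13 : y1 ≠ y3) (n14 : y1 ≠ y4) (n15 : y1 ≠ y5)
    (n23 : y2 ≠ y3) (n24 : y2 ≠ y4) (n25 : y2 ≠ y5)
    (n34 : y3 ≠ y4) (n35 : y3 ≠ y5) (n45 : y4 ≠ y5)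
    (h14 : G.Adj y1 y4) (h42 : G.Adj y4 y2) (h23 : G.Adj y2 y3)
    (h35 : G.Adj y3 y5) (h51 : G.Adj y5 y1) :
    ¬ (delGraph G ({y3, y4, y5} : Set V)).Reachable y1 y2 := by
  classical
  intro hreach
  set s : Set V := {y3, y4, y5} with hs
  have hy1s : y1 ∉ s := by simp [hs, n13, n14, n15]
  obtain ⟨w0⟩ := hreach
  set p : (delGraph G s).Walk y1 y2 := w0.toPath.1 with hp
  have hpPath : p.IsPath := w0.toPath.2
  have hsupT : ∀ x ∈ p.support, x ∉ s := delGraph_support_not_mem p hy1s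
  have hedges : ∀ e ∈ p.edges, e ∈ G.edgeSet := fun e he =>
    SimpleGraph.edgeSet_mono (delGraph_le G s) (p.edges_subset_edgeSet he)
  set q : G.Walk y1 y2 := p.transfer G hedges with hq
  have hqPath : q.IsPath := hpPath.transfer hedges
  have hqsup : q.support = p.support := SimpleGraph.Walk.support_transfer _ _
  have hy3sup : y3 ∉ q.support := by
    rw [hqsup]; intro h; exact hsupT y3 h (by simp [hs])
  have hy4sup : y4 ∉ q.support := by
    rw [hqsup]; intro h; exact hsupT y4 h (by simp [hs])
  have hy5sup : y5 ∉ q.support := by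
    rw [hqsup]; intro h; exact hsupT y5 h (by simp [hs])
  -- first cycle: y4 - y1 - ... - y2 - y4
  have hr1 : (q.concat h42.symm).IsPath := by
    rw [SimpleGraph.Walk.isPath_def, SimpleGraph.Walk.support_concat]
    rw [List.nodup_append']
    exact ⟨hqPath.support_nodup, List.nodup_singleton _,
      by intro a ha hb; simp at hb; subst hb; exact hy4sup ha⟩
  have hc1 : (SimpleGraph.Walk.cons h14.symm (q.concat h42.symm)).IsCycle := by
    rw [SimpleGraph.Walk.cons_isCycle_iff]
    refine ⟨hr1, ?_⟩
    rw [SimpleGraph.Walk.edges_concat, List.concat_eq_append, List.mem_append]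
    rintro (h | h)
    · exact hy4sup (q.fst_mem_support_of_mem_edges h)
    · simp only [List.mem_singleton, Sym2.eq_iff] at h
      rcases h with ⟨h1, h2⟩ | ⟨h1, h2⟩
      · exact n12 (h2.trans h1)
      · exact n12 h2
  -- second cycle: y5 - y1 - ... - y2 - y3 - y5
  have hr2 : ((q.concat h23).concat h35).IsPath := by
    rw [SimpleGraph.Walk.isPath_def, SimpleGraph.Walk.support_concat,
      SimpleGraph.Walk.support_concat]
    rw [List.append_assoc, List.nodup_append']
    refine ⟨hqPath.support_nodup, ?_, ?_⟩
    · simp [n35]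
    · intro a ha hb
      simp only [List.singleton_append, List.mem_cons, List.mem_singleton,
        List.not_mem_nil, or_false] at hb
      rcases hb with rfl | rfl
      · exact hy3sup ha
      · exact hy5sup ha
  have hc2 : (SimpleGraph.Walk.cons h51 ((q.concat h23).concat h35)).IsCycle := by
    rw [SimpleGraph.Walk.cons_isCycle_iff]
    refine ⟨hr2, ?_⟩
    rw [SimpleGraph.Walk.edges_concat, SimpleGraph.Walk.edges_concat,
      List.concat_eq_append, List.concat_eq_append, List.append_assoc, List.mem_append]
    rintro (h | h)
    · exact hy5sup (q.fst_mem_support_of_mem_edges h)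
    · simp only [List.singleton_append, List.mem_cons, List.mem_singleton,
        List.not_mem_nil, or_false, Sym2.eq_iff] at h
      rcases h with (⟨h1, h2⟩ | ⟨h1, h2⟩) | (⟨h1, h2⟩ | ⟨h1, h2⟩)
      · exact n13 h2
      · exact n35 h1.symm
      · exact n35 h1.symm
      · exact n13 h2
  -- common edge: some edge of q
  have hqne : q.edges ≠ [] := by
    intro h
    have hl : q.length = 0 := by
      have := congrArg List.length h
      rwa [SimpleGraph.Walk.length_edges] at this
    exact n12 (q.eq_of_length_eq_zero hl)
  obtain ⟨e, he⟩ := List.exists_mem_of_ne_nil _ hqne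
  have he1 : e ∈ (SimpleGraph.Walk.cons h14.symm (q.concat h42.symm)).edges := by
    rw [SimpleGraph.Walk.edges_cons, SimpleGraph.Walk.edges_concat, List.concat_eq_append]
    exact List.mem_cons_of_mem _ (List.mem_append.2 (Or.inl he))
  have he2 : e ∈ (SimpleGraph.Walk.cons h51 ((q.concat h23).concat h35)).edges := by
    rw [SimpleGraph.Walk.edges_cons, SimpleGraph.Walk.edges_concat,
      SimpleGraph.Walk.edges_concat, List.concat_eq_append, List.concat_eq_append]
    exact List.mem_cons_of_mem _
      (List.mem_append.2 (Or.inl (List.mem_append.2 (Or.inl he))))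
  have hseteq := hcactus.2 y4 y5 _ _ hc1 hc2 e he1 he2
  -- s(y2, y4) belongs to the first cycle, hence to the second: contradiction
  have hm1 : s(y2, y4) ∈ (SimpleGraph.Walk.cons h14.symm (q.concat h42.symm)).edges := by
    rw [SimpleGraph.Walk.edges_cons, SimpleGraph.Walk.edges_concat, List.concat_eq_append]
    exact List.mem_cons_of_mem _ (List.mem_append.2 (Or.inr (List.mem_singleton.2 rfl)))
  have hm2 : s(y2, y4) ∈ (SimpleGraph.Walk.cons h51 ((q.concat h23).concat h35)).edges := by
    have hmem : s(y2, y4) ∈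
        {e' | e' ∈ (SimpleGraph.Walk.cons h14.symm (q.concat h42.symm)).edges} := hm1
    rw [hseteq] at hmem
    exact hmem
  rw [SimpleGraph.Walk.edges_cons, SimpleGraph.Walk.edges_concat,
    SimpleGraph.Walk.edges_concat, List.concat_eq_append, List.concat_eq_append,
    List.append_assoc, List.mem_cons, List.mem_append] at hm2
  rcases hm2 with h | h | h
  · rw [Sym2.eq_iff] at h
    rcases h with ⟨h1, h2⟩ | ⟨h1, h2⟩
    · exact n25 h1
    · exact n12 h1.symm
  · exact hy4sup (q.snd_mem_support_of_mem_edges h)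
  · simp only [List.singleton_append, List.mem_cons, List.mem_singleton,
      List.not_mem_nil, or_false, Sym2.eq_iff] at h
    rcases h with (⟨h1, h2⟩ | ⟨h1, h2⟩) | (⟨h1, h2⟩ | ⟨h1, h2⟩)
    · exact n34 h2.symm
    · exact n23 h1
    · exact n23 h1
    · exact n25 h1

/-- Swapping the side parts of two vertex covers: if `S1 = {y3,y4,y5} ∪ U1 ∪ U2` and
`S2 = {y1,y2,y5} ∪ V1 ∪ V2` are vertex covers of `G` (with `Ua, Va ⊆ T_a`), then
`W1 = {y2,y4,y5} ∪ U1 ∪ V2` and `W2 = {y1,y3,y4} ∪ V1 ∪ U2` are vertex covers too. -/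
theorem swap_covers_case_yi4 {V : Type*} (G : SimpleGraph V)
    (y1 y2 y3 y4 y5 : V)
    (hcactus : IsCactus G)
    (hne : List.Pairwise Ne [y1, y2, y3, y4, y5])
    (h14 : G.Adj y1 y4) (h42 : G.Adj y4 y2) (h23 : G.Adj y2 y3)
    (h35 : G.Adj y3 y5) (h51 : G.Adj y5 y1)
    (h12 : ¬ G.Adj y1 y2)
    (hy3 : ∀ z, G.Adj y3 z → z = y2 ∨ z = y5)
    (hy4 : ∀ z, G.Adj y4 z → z = y1 ∨ z = y2)
    (hy5 : ∀ z, G.Adj y5 z → z = y3 ∨ z = y1)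
    (U1 U2 V1 V2 : Set V)
    (hU1 : U1 ⊆ sideSet G y1 y2 y3 y4 y5 y1) (hU2 : U2 ⊆ sideSet G y1 y2 y3 y4 y5 y2)
    (hV1 : V1 ⊆ sideSet G y1 y2 y3 y4 y5 y1) (hV2 : V2 ⊆ sideSet G y1 y2 y3 y4 y5 y2)
    (hS1 : IsVC G (({y3, y4, y5} : Set V) ∪ U1 ∪ U2))
    (hS2 : IsVC G (({y1, y2, y5} : Set V) ∪ V1 ∪ V2)) :
    IsVC G (({y2, y4, y5} : Set V) ∪ U1 ∪ V2) ∧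
      IsVC G (({y1, y3, y4} : Set V) ∪ V1 ∪ U2) := by
  classical
  obtain ⟨hne1, hne⟩ := List.pairwise_cons.1 hne
  obtain ⟨hne2, hne⟩ := List.pairwise_cons.1 hne
  obtain ⟨hne3, hne⟩ := List.pairwise_cons.1 hne
  obtain ⟨hne4, -⟩ := List.pairwise_cons.1 hne
  have n12 : y1 ≠ y2 := hne1 y2 (by simp)
  have n13 : y1 ≠ y3 := hne1 y3 (by simp)
  have n14 : y1 ≠ y4 := hne1 y4 (by simp)
  have n15 : y1 ≠ y5 := hne1 y5 (by simp)
  have n23 : y2 ≠ y3 := hne2 y3 (by simp)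
  have n24 : y2 ≠ y4 := hne2 y4 (by simp)
  have n25 : y2 ≠ y5 := hne2 y5 (by simp)
  have n34 : y3 ≠ y4 := hne3 y4 (by simp)
  have n35 : y3 ≠ y5 := hne3 y5 (by simp)
  have n45 : y4 ≠ y5 := hne4 y5 (by simp)
  set T : SimpleGraph V := delGraph G ({y3, y4, y5} : Set V) with hT
  have key : ¬ T.Reachable y1 y2 :=
    key_no_reach hcactus n12 n13 n14 n15 n23 n24 n25 n34 n35 n45 h14 h42 h23 h35 h51
  have hTadj : ∀ {u v : V}, G.Adj u v → u ∉ ({y3, y4, y5} : Set V) →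
      v ∉ ({y3, y4, y5} : Set V) → T.Adj u v := fun h hu hv => ⟨h, hu, hv⟩
  have reach_absurd : ∀ u v : V, T.Adj u v → T.Reachable u y1 → T.Reachable v y2 → False :=
    fun u v h r1 r2 => key (r1.symm.trans (h.reachable.trans r2))
  have reach_absurd' : ∀ u : V, T.Reachable u y1 → T.Reachable u y2 → False :=
    fun u r1 r2 => key (r1.symm.trans r2)
  have hy1S1 : y1 ∉ ({y3, y4, y5} : Set V) ∪ U1 ∪ U2 := by
    rintro ((h | h) | h)
    · simp only [Set.mem_insert_iff, Set.mem_singleton_iff] at h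
      rcases h with h | h | h
      exacts [n13 h, n14 h, n15 h]
    · exact (hU1 h).1 (by simp)
    · exact (hU2 h).1 (by simp)
  have hy2S1 : y2 ∉ ({y3, y4, y5} : Set V) ∪ U1 ∪ U2 := by
    rintro ((h | h) | h)
    · simp only [Set.mem_insert_iff, Set.mem_singleton_iff] at h
      rcases h with h | h | h
      exacts [n23 h, n24 h, n25 h]
    · exact (hU1 h).1 (by simp)
    · exact (hU2 h).1 (by simp)
  constructor
  · -- W1 = {y2, y4, y5} ∪ U1 ∪ V2
    intro u v huv
    by_cases hu3 : u = y3
    · rcases hy3 v (hu3 ▸ huv) with hv | hv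
      · exact Or.inr (Or.inl (Or.inl (by simp [hv])))
      · exact Or.inr (Or.inl (Or.inl (by simp [hv])))
    by_cases hv3 : v = y3
    · rcases hy3 u (hv3 ▸ huv.symm) with hu | hu
      · exact Or.inl (Or.inl (Or.inl (by simp [hu])))
      · exact Or.inl (Or.inl (Or.inl (by simp [hu])))
    by_cases hu4 : u = y4
    · exact Or.inl (Or.inl (Or.inl (by simp [hu4])))
    by_cases hv4 : v = y4
    · exact Or.inr (Or.inl (Or.inl (by simp [hv4])))
    by_cases hu5 : u = y5
    · exact Or.inl (Or.inl (Or.inl (by simp [hu5])))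
    by_cases hv5 : v = y5
    · exact Or.inr (Or.inl (Or.inl (by simp [hv5])))
    have hus : u ∉ ({y3, y4, y5} : Set V) := by simp [hu3, hu4, hu5]
    have hvs : v ∉ ({y3, y4, y5} : Set V) := by simp [hv3, hv4, hv5]
    have hTuv : T.Adj u v := hTadj huv hus hvs
    by_cases hu2 : u = y2
    · exact Or.inl (Or.inl (Or.inl (by simp [hu2])))
    by_cases hv2 : v = y2
    · exact Or.inr (Or.inl (Or.inl (by simp [hv2])))
    by_cases hu1 : u = y1
    · rcases (hS1 huv).resolve_left (by rw [hu1]; exact hy1S1) with (h | h) | h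
      · exact absurd h hvs
      · exact Or.inr (Or.inl (Or.inr h))
      · exact absurd (SimpleGraph.Reachable.refl y1)
          (fun r => reach_absurd y1 v (by rw [← hu1]; exact hTuv) r (hU2 h).2)
    by_cases hv1 : v = y1
    · rcases (hS1 huv.symm).resolve_left (by rw [hv1]; exact hy1S1) with (h | h) | h
      · exact absurd h hus
      · exact Or.inl (Or.inl (Or.inr h))
      · exact absurd (SimpleGraph.Reachable.refl y1)
          (fun r => reach_absurd y1 u (by rw [← hv1]; exact hTuv.symm) r (hU2 h).2)
    -- generic case
    have hS1' : u ∈ U1 ∪ U2 ∨ v ∈ U1 ∪ U2 := by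
      rcases hS1 huv with ((h | h) | h) | ((h | h) | h)
      · exact absurd h hus
      · exact Or.inl (Or.inl h)
      · exact Or.inl (Or.inr h)
      · exact absurd h hvs
      · exact Or.inr (Or.inl h)
      · exact Or.inr (Or.inr h)
    have hS2' : u ∈ V1 ∪ V2 ∨ v ∈ V1 ∪ V2 := by
      rcases hS2 huv with ((h | h) | h) | ((h | h) | h)
      · simp only [Set.mem_insert_iff, Set.mem_singleton_iff] at h
        rcases h with rfl | rfl | rfl
        exacts [absurd rfl hu1, absurd rfl hu2, absurd rfl hu5]
      · exact Or.inl (Or.inl h)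
      · exact Or.inl (Or.inr h)
      · simp only [Set.mem_insert_iff, Set.mem_singleton_iff] at h
        rcases h with rfl | rfl | rfl
        exacts [absurd rfl hv1, absurd rfl hv2, absurd rfl hv5]
      · exact Or.inr (Or.inl h)
      · exact Or.inr (Or.inr h)
    rcases hS1' with (h | h) | (h | h)
    · exact Or.inl (Or.inl (Or.inr h))
    · -- u ∈ U2 : u reaches y2
      have hu2' : T.Reachable u y2 := (hU2 h).2
      rcases hS2' with (h' | h') | (h' | h')
      · exact absurd ((hV1 h').2) (fun r => reach_absurd' u r hu2')
      · exact Or.inl (Or.inr h')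
      · exact absurd ((hV1 h').2) (fun r => reach_absurd v u hTuv.symm r hu2')
      · exact Or.inr (Or.inr h')
    · exact Or.inr (Or.inl (Or.inr h))
    · -- v ∈ U2 : v reaches y2
      have hv2' : T.Reachable v y2 := (hU2 h).2
      rcases hS2' with (h' | h') | (h' | h')
      · exact absurd ((hV1 h').2) (fun r => reach_absurd u v hTuv r hv2')
      · exact Or.inl (Or.inr h')
      · exact absurd ((hV1 h').2) (fun r => reach_absurd' v r hv2')
      · exact Or.inr (Or.inr h')
  · -- W2 = {y1, y3, y4} ∪ V1 ∪ U2
    intro u v huv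
    by_cases hu5 : u = y5
    · rcases hy5 v (hu5 ▸ huv) with hv | hv
      · exact Or.inr (Or.inl (Or.inl (by simp [hv])))
      · exact Or.inr (Or.inl (Or.inl (by simp [hv])))
    by_cases hv5 : v = y5
    · rcases hy5 u (hv5 ▸ huv.symm) with hu | hu
      · exact Or.inl (Or.inl (Or.inl (by simp [hu])))
      · exact Or.inl (Or.inl (Or.inl (by simp [hu])))
    by_cases hu3 : u = y3
    · exact Or.inl (Or.inl (Or.inl (by simp [hu3])))
    by_cases hv3 : v = y3
    · exact Or.inr (Or.inl (Or.inl (by simp [hv3])))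
    by_cases hu4 : u = y4
    · exact Or.inl (Or.inl (Or.inl (by simp [hu4])))
    by_cases hv4 : v = y4
    · exact Or.inr (Or.inl (Or.inl (by simp [hv4])))
    have hus : u ∉ ({y3, y4, y5} : Set V) := by simp [hu3, hu4, hu5]
    have hvs : v ∉ ({y3, y4, y5} : Set V) := by simp [hv3, hv4, hv5]
    have hTuv : T.Adj u v := hTadj huv hus hvs
    by_cases hu1 : u = y1
    · exact Or.inl (Or.inl (Or.inl (by simp [hu1])))
    by_cases hv1 : v = y1
    · exact Or.inr (Or.inl (Or.inl (by simp [hv1])))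
    by_cases hu2 : u = y2
    · rcases (hS1 huv).resolve_left (by rw [hu2]; exact hy2S1) with (h | h) | h
      · exact absurd h hvs
      · exact absurd ((hU1 h).2)
          (fun r => reach_absurd v y2 (by rw [← hu2]; exact hTuv.symm) r
            (SimpleGraph.Reachable.refl y2))
      · exact Or.inr (Or.inr h)
    by_cases hv2 : v = y2
    · rcases (hS1 huv.symm).resolve_left (by rw [hv2]; exact hy2S1) with (h | h) | h
      · exact absurd h hus
      · exact absurd ((hU1 h).2)
          (fun r => reach_absurd u y2 (by rw [← hv2]; exact hTuv) r
            (SimpleGraph.Reachable.refl y2))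
      · exact Or.inl (Or.inr h)
    -- generic case
    have hS1' : u ∈ U1 ∪ U2 ∨ v ∈ U1 ∪ U2 := by
      rcases hS1 huv with ((h | h) | h) | ((h | h) | h)
      · exact absurd h hus
      · exact Or.inl (Or.inl h)
      · exact Or.inl (Or.inr h)
      · exact absurd h hvs
      · exact Or.inr (Or.inl h)
      · exact Or.inr (Or.inr h)
    have hS2' : u ∈ V1 ∪ V2 ∨ v ∈ V1 ∪ V2 := by
      rcases hS2 huv with ((h | h) | h) | ((h | h) | h)
      · simp only [Set.mem_insert_iff, Set.mem_singleton_iff] at h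
        rcases h with rfl | rfl | rfl
        exacts [absurd rfl hu1, absurd rfl hu2, absurd rfl hu5]
      · exact Or.inl (Or.inl h)
      · exact Or.inl (Or.inr h)
      · simp only [Set.mem_insert_iff, Set.mem_singleton_iff] at h
        rcases h with rfl | rfl | rfl
        exacts [absurd rfl hv1, absurd rfl hv2, absurd rfl hv5]
      · exact Or.inr (Or.inl h)
      · exact Or.inr (Or.inr h)
    rcases hS1' with (h | h) | (h | h)
    · -- u ∈ U1 : u reaches y1
      have hu1' : T.Reachable u y1 := (hU1 h).2
      rcases hS2' with (h' | h') | (h' | h')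
      · exact Or.inl (Or.inl (Or.inr h'))
      · exact absurd ((hV2 h').2) (fun r => reach_absurd' u hu1' r)
      · exact Or.inr (Or.inl (Or.inr h'))
      · exact absurd ((hV2 h').2) (fun r => reach_absurd u v hTuv hu1' r)
    · exact Or.inl (Or.inr h)
    · -- v ∈ U1 : v reaches y1
      have hv1' : T.Reachable v y1 := (hU1 h).2
      rcases hS2' with (h' | h') | (h' | h')
      · exact Or.inl (Or.inl (Or.inr h'))
      · exact absurd ((hV2 h').2) (fun r => reach_absurd v u hTuv.symm hv1' r)
      · exact Or.inr (Or.inl (Or.inr h'))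
      · exact absurd ((hV2 h').2) (fun r => reach_absurd' v hv1' r)
    · exact Or.inr (Or.inr h)
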